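/- Let X_1,...,X_K be exchangeable, non-negative, integrable random variables. Then for any a > 0, P(∃ k ≤ K : (1/k)∑_{i=1}^k X_i ≥ 1/a) ≤ a·E[X_1]. -/

import Mathlib

open MeasureTheory Set

/-- Exchangeable Markov inequality: if `X_1,...,X_K` are exchangeable,
non-negative, integrable random variables, then for any `a > 0`,
`P(∃ k ≤ K : (1/k) ∑_{i=1}^k X_i ≥ 1/a) ≤ a · E[X_1]`. -/
theorem exchangeable_markov_inequality
    {Ω : Type*} [MeasurableSpace Ω] (μ : Measure Ω) [IsProbabilityMeasure μ]
    (K : ℕ) (hK : 0 < K) (X : Fin K → Ω → ℝ)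
    (hmeas : ∀ k, Measurable (X k))
    (hnonneg : ∀ k ω, 0 ≤ X k ω)
    (hint : ∀ k, Integrable (X k) μ)
    (hexch : ∀ σ : Equiv.Perm (Fin K),
      Measure.map (fun ω => fun i => X (σ i) ω) μ
        = Measure.map (fun ω => fun i => X i ω) μ) :
    ∀ a > (0:ℝ),
      μ {ω | ∃ k : Fin K, (∑ i ∈ Finset.Iic k, X i ω) / ((k:ℕ) + 1) ≥ 1 / a}
        ≤ ENNReal.ofReal (a * ∫ ω, X ⟨0, hK⟩ ω ∂μ) := by
  intro a ha
  set i0 : Fin K := ⟨0, hK⟩ with hi0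
  set V : Ω → (Fin K → ℝ) := fun ω i => X i ω with hVdef
  have hV : Measurable V := measurable_pi_lambda _ (fun i => hmeas i)
  set ν : Measure (Fin K → ℝ) := μ.map V with hν
  have hνprob : IsProbabilityMeasure ν := Measure.isProbabilityMeasure_map hV.aemeasurable
  set S : Fin K → (Fin K → ℝ) → ℝ := fun k x => ∑ i ∈ Finset.Iic k, x i with hS
  have hSmeas : ∀ k, Measurable (S k) :=
    fun k => Finset.measurable_sum _ (fun i _ => measurable_pi_apply i)
  set B : Fin K → Set (Fin K → ℝ) :=
    fun k => {x | 1/a ≤ S k x / ((k:ℕ)+1) ∧ ∀ j, k < j → S j x / ((j:ℕ)+1) < 1/a}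
    with hB
  have hBmeas : ∀ k, MeasurableSet (B k) := by
    intro k
    have h1 : MeasurableSet {x : Fin K → ℝ | 1/a ≤ S k x / ((k:ℕ)+1)} :=
      measurableSet_le measurable_const ((hSmeas k).div_const _)
    have h2 : MeasurableSet {x : Fin K → ℝ | ∀ j, k < j → S j x / ((j:ℕ)+1) < 1/a} := by
      have : {x : Fin K → ℝ | ∀ j, k < j → S j x / ((j:ℕ)+1) < 1/a}
          = ⋂ j, ⋂ (_ : k < j), {x | S j x / ((j:ℕ)+1) < 1/a} := by
        ext x; simp [Set.mem_iInter]
      rw [this]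
      exact MeasurableSet.iInter fun j => MeasurableSet.iInter fun _ =>
        measurableSet_lt ((hSmeas j).div_const _) measurable_const
    exact h1.inter h2
  -- covering
  have hcover : {x : Fin K → ℝ | ∃ k : Fin K, 1/a ≤ S k x / ((k:ℕ)+1)} = ⋃ k, B k := by
    ext x
    constructor
    · rintro ⟨k, hk⟩
      have hne : (Finset.univ.filter (fun k : Fin K => 1/a ≤ S k x / ((k:ℕ)+1))).Nonempty :=
        ⟨k, Finset.mem_filter.mpr ⟨Finset.mem_univ k, hk⟩⟩
      set F := Finset.univ.filter (fun k : Fin K => 1/a ≤ S k x / ((k:ℕ)+1)) with hF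
      refine Set.mem_iUnion.2 ⟨F.max' hne, ?_, ?_⟩
      · have := F.max'_mem hne
        simp only [hF, Finset.mem_filter] at this
        exact this.2
      · intro j hj
        by_contra hle
        push_neg at hle
        have hjF : j ∈ F := Finset.mem_filter.mpr ⟨Finset.mem_univ j, hle⟩
        exact absurd (Finset.le_max' F j hjF) (not_le.mpr hj)
    · rintro ⟨s, ⟨k, rfl⟩, hx⟩
      exact ⟨k, hx.1⟩
  -- disjointness
  have hdisj : Pairwise (Function.onFun Disjoint B) := by
    intro k l hkl
    rcases lt_or_gt_of_ne hkl with h | h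
    · refine Set.disjoint_left.2 fun x hxk hxl => ?_
      exact absurd hxl.1 (not_le.mpr (hxk.2 l h))
    · refine Set.disjoint_left.2 fun x hxk hxl => ?_
      exact absurd hxk.1 (not_le.mpr (hxl.2 k h))
  -- integrability of coordinates
  have hInt : ∀ i : Fin K, Integrable (fun x : Fin K → ℝ => x i) ν := by
    intro i
    rw [hν, integrable_map_measure (measurable_pi_apply i).aestronglyMeasurable hV.aemeasurable]
    exact hint i
  have hIntS : ∀ k : Fin K, Integrable (fun x => S k x / ((k:ℕ)+1)) ν := by
    intro k
    exact (integrable_finset_sum _ (fun i _ => hInt i)).div_const _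
  -- exchangeability: swapping coordinates i and i0 fixes B k for i ≤ k
  have hswap : ∀ k : Fin K, ∀ i ∈ Finset.Iic k,
      ∫ x in B k, x i ∂ν = ∫ x in B k, x i0 ∂ν := by
    intro k i hi
    have hik : i ≤ k := Finset.mem_Iic.mp hi
    have hi0k : i0 ≤ k := by simp [hi0, Fin.le_def]
    set σ : Equiv.Perm (Fin K) := Equiv.swap i i0 with hσ
    set T : (Fin K → ℝ) → (Fin K → ℝ) := fun x => x ∘ σ with hT
    have hTmeas : Measurable T :=
      measurable_pi_lambda _ (fun j => measurable_pi_apply _)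
    have hmap : ν.map T = ν := by
      rw [hν, Measure.map_map hTmeas hV]
      exact hexch σ
    have hmemσ : ∀ j : Fin K, k ≤ j → ∀ m : Fin K, (σ m ≤ j ↔ m ≤ j) := by
      intro j hj m
      have hij : i ≤ j := le_trans hik hj
      have hi0j : i0 ≤ j := le_trans hi0k hj
      rcases eq_or_ne m i with rfl | h1
      · rw [hσ, Equiv.swap_apply_left]
        exact iff_of_true hi0j hij
      rcases eq_or_ne m i0 with rfl | h2
      · rw [hσ, Equiv.swap_apply_right]
        exact iff_of_true hij hi0j
      · rw [hσ, Equiv.swap_apply_of_ne_of_ne h1 h2]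
    have hSσ : ∀ j : Fin K, k ≤ j → ∀ x : Fin K → ℝ, S j (T x) = S j x := by
      intro j hj x
      refine Finset.sum_equiv σ ?_ ?_
      · intro m
        simp only [Finset.mem_Iic]
        exact (hmemσ j hj m).symm
      · intro m _
        rfl
    have hinv : T ⁻¹' (B k) = B k := by
      ext x
      simp only [Set.mem_preimage, hB, Set.mem_setOf_eq]
      constructor
      · rintro ⟨h1, h2⟩
        refine ⟨by rwa [hSσ k le_rfl x] at h1, fun j hj => ?_⟩
        have := h2 j hj
        rwa [hSσ j (le_of_lt hj) x] at this
      · rintro ⟨h1, h2⟩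
        refine ⟨by rwa [hSσ k le_rfl x], fun j hj => ?_⟩
        rw [hSσ j (le_of_lt hj) x]
        exact h2 j hj
    calc ∫ x in B k, x i ∂ν = ∫ x in B k, x i ∂(ν.map T) := by rw [hmap]
      _ = ∫ x in T ⁻¹' (B k), (T x) i ∂ν := by
          exact setIntegral_map (hBmeas k) (measurable_pi_apply i).aestronglyMeasurable
            hTmeas.aemeasurable
      _ = ∫ x in B k, x i0 ∂ν := by
          rw [hinv]
          refine setIntegral_congr_fun (hBmeas k) (fun x _ => ?_)
          show x (σ i) = x i0
          rw [hσ, Equiv.swap_apply_left]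
  -- per-piece bound
  have hstep : ∀ k : Fin K, (1/a) * (ν (B k)).toReal ≤ ∫ x in B k, x i0 ∂ν := by
    intro k
    have hIOn : IntegrableOn (fun x => S k x / ((k:ℕ)+1)) (B k) ν := (hIntS k).integrableOn
    have h1 : (1/a) * (ν (B k)).toReal ≤ ∫ x in B k, S k x / ((k:ℕ)+1) ∂ν := by
      have hc : ∫ _ in B k, (1/a) ∂ν = (ν (B k)).toReal • (1/a) := setIntegral_const _
      rw [mul_comm, ← smul_eq_mul, ← hc]
      exact setIntegral_mono_on (integrableOn_const (measure_ne_top _ _))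
        hIOn (hBmeas k) (fun x hx => hx.1)
    have h2 : ∫ x in B k, S k x / ((k:ℕ)+1) ∂ν = ∫ x in B k, x i0 ∂ν := by
      have hsum : ∫ x in B k, S k x ∂ν = ((k:ℕ)+1 : ℝ) * ∫ x in B k, x i0 ∂ν := by
        rw [hS]
        rw [integral_finset_sum _ (fun i _ => (hInt i).integrableOn)]
        rw [Finset.sum_congr rfl (hswap k)]
        rw [Finset.sum_const, Fin.card_Iic]
        ring
      rw [integral_div, hsum]
      have : ((k:ℕ)+1 : ℝ) ≠ 0 := by positivity
      field_simp
    linarith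
  -- glue
  have hi0int : Integrable (fun x : Fin K → ℝ => x i0) ν := hInt i0
  have hi0nonneg : 0 ≤ᵐ[ν] (fun x : Fin K → ℝ => x i0) := by
    rw [hν]
    refine (ae_map_iff hV.aemeasurable (measurableSet_le measurable_const
      (measurable_pi_apply i0))).2 ?_
    filter_upwards with ω
    exact hnonneg i0 ω
  have hEmeas : MeasurableSet {x : Fin K → ℝ | ∃ k : Fin K, 1/a ≤ S k x / ((k:ℕ)+1)} := by
    rw [hcover]; exact MeasurableSet.iUnion hBmeas
  have hmeasure : ν {x : Fin K → ℝ | ∃ k : Fin K, 1/a ≤ S k x / ((k:ℕ)+1)}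
      = ∑ k, ν (B k) := by
    rw [hcover, measure_iUnion hdisj hBmeas, tsum_fintype]
  have hintE : ∫ x in {x : Fin K → ℝ | ∃ k : Fin K, 1/a ≤ S k x / ((k:ℕ)+1)}, x i0 ∂ν
      = ∑ k, ∫ x in B k, x i0 ∂ν := by
    rw [hcover]
    exact integral_iUnion_fintype hBmeas hdisj (fun k => hi0int.integrableOn)
  have hmain : (ν {x : Fin K → ℝ | ∃ k : Fin K, 1/a ≤ S k x / ((k:ℕ)+1)}).toReal
      ≤ a * ∫ x, x i0 ∂ν := by
    have htr : (ν {x : Fin K → ℝ | ∃ k : Fin K, 1/a ≤ S k x / ((k:ℕ)+1)}).toReal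
        = ∑ k, (ν (B k)).toReal := by
      rw [hmeasure, ENNReal.toReal_sum (fun k _ => measure_ne_top _ _)]
    have hsumle : (1/a) * (ν {x : Fin K → ℝ | ∃ k : Fin K, 1/a ≤ S k x / ((k:ℕ)+1)}).toReal
        ≤ ∫ x, x i0 ∂ν := by
      rw [htr, Finset.mul_sum]
      calc ∑ k, (1/a) * (ν (B k)).toReal ≤ ∑ k, ∫ x in B k, x i0 ∂ν :=
            Finset.sum_le_sum (fun k _ => hstep k)
        _ = ∫ x in {x : Fin K → ℝ | ∃ k : Fin K, 1/a ≤ S k x / ((k:ℕ)+1)}, x i0 ∂ν :=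
            hintE.symm
        _ ≤ ∫ x, x i0 ∂ν := setIntegral_le_integral hi0int hi0nonneg
    have h2 : a * ((1/a) * (ν {x : Fin K → ℝ | ∃ k : Fin K, 1/a ≤ S k x / ((k:ℕ)+1)}).toReal)
        = (ν {x : Fin K → ℝ | ∃ k : Fin K, 1/a ≤ S k x / ((k:ℕ)+1)}).toReal := by
      field_simp
    linarith [mul_le_mul_of_nonneg_left hsumle ha.le]
  have hint0 : ∫ x, x i0 ∂ν = ∫ ω, X i0 ω ∂μ := by
    rw [hν, integral_map hV.aemeasurable (measurable_pi_apply i0).aestronglyMeasurable]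
  have hsetEq : {ω | ∃ k : Fin K, (∑ i ∈ Finset.Iic k, X i ω) / ((k:ℕ) + 1) ≥ 1 / a}
      = V ⁻¹' {x : Fin K → ℝ | ∃ k : Fin K, 1/a ≤ S k x / ((k:ℕ)+1)} := by
    rfl
  rw [hsetEq, ← Measure.map_apply hV hEmeas, ← hν, ← hint0]
  set m := ν {x : Fin K → ℝ | ∃ k : Fin K, 1/a ≤ S k x / ((k:ℕ)+1)} with hm
  calc m = ENNReal.ofReal m.toReal := (ENNReal.ofReal_toReal (measure_ne_top _ _)).symm
    _ ≤ ENNReal.ofReal (a * ∫ x, x i0 ∂ν) := ENNReal.ofReal_le_ofReal hmain
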